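/- Let h : Z_2^{n-1} → Z_2 be arbitrary, g(x) = x_1 ⊕ ⋯ ⊕ x_{n-1} ⊕ b, and f = (h | h ⊕ g) on Z_2^n. If x = (x', 0) where x' ∈ Z_2^{n-1} is a linear structure of h with even Hamming weight, then ∑_{y ∈ Z_2^n} (f(y) ⊕ f(y ⊕ x)) equals either 0 or 2^n; consequently Δ_f(x) = ±2^n. -/
import Mathlib


open Finset

/-- `(-1)^{f(x)}` as an integer, for functions on `Z_2^{m} × Z_2 ≅ Z_2^{m+1}`
(the second coordinate is the most significant bit). -/
def bhatP {m : ℕ} (f : (Fin m → ZMod 2) × ZMod 2 → ZMod 2)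
    (x : (Fin m → ZMod 2) × ZMod 2) : ℤ :=
  (-1) ^ (f x).val

/-- Autocorrelation `Δ_f(α)`. -/
def autocorrP {m : ℕ} (f : (Fin m → ZMod 2) × ZMod 2 → ZMod 2)
    (a : (Fin m → ZMod 2) × ZMod 2) : ℤ :=
  ∑ x : (Fin m → ZMod 2) × ZMod 2, bhatP f x * bhatP f (x + a)

/-- Hamming weight. -/
def wt {m : ℕ} (x' : Fin m → ZMod 2) : ℕ :=
  (Finset.univ.filter fun i => x' i = 1).card

theorem concat_linear_structure_sum {m : ℕ} (hm : 1 ≤ m)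
    (h : (Fin m → ZMod 2) → ZMod 2) (b : ZMod 2)
    (f : (Fin m → ZMod 2) × ZMod 2 → ZMod 2)
    (hf : ∀ (x' : Fin m → ZMod 2) (ε : ZMod 2),
      f (x', ε) = h x' + ε * ((∑ i, x' i) + b))
    (x' : Fin m → ZMod 2) (c : ZMod 2)
    (hls : ∀ y', h y' + h (y' + x') = c) (hx : Even (wt x')) :
    (∑ y : (Fin m → ZMod 2) × ZMod 2, ((f y + f (y + (x', 0))).val : ℤ) = 0 ∨
      ∑ y : (Fin m → ZMod 2) × ZMod 2, ((f y + f (y + (x', 0))).val : ℤ) = 2 ^ (m + 1)) ∧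
    (autocorrP f (x', 0) = 2 ^ (m + 1) ∨ autocorrP f (x', 0) = -2 ^ (m + 1)) := by
  -- sum of coordinates of x' is 0
  have hsum : (∑ i, x' i) = 0 := by
    have h1 : (∑ i, x' i) = (wt x' : ZMod 2) := by
      rw [wt, Finset.card_filter]
      push_cast
      refine Finset.sum_congr rfl fun i _ => ?_
      have h01 : ∀ a : ZMod 2, a = 0 ∨ a = 1 := by decide
      rcases h01 (x' i) with h0 | h0 <;> simp [h0]
    rw [h1]
    exact (ZMod.natCast_eq_zero_iff (wt x') 2).mpr hx.two_dvd
  -- f y + f (y + (x',0)) is constantly c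
  have fconst : ∀ y : (Fin m → ZMod 2) × ZMod 2, f y + f (y + (x', 0)) = c := by
    rintro ⟨y', ε⟩
    have hadd : ((y', ε) + (x', (0 : ZMod 2))) = (y' + x', ε) := by
      simp [Prod.ext_iff]
    rw [hadd, hf, hf]
    have hS : (∑ i, (y' + x') i) = ∑ i, y' i := by
      simp [Pi.add_apply, Finset.sum_add_distrib, hsum]
    rw [hS]
    have key : ∀ a d e : ZMod 2, a + e + (d + e) = a + d := by decide
    rw [key]
    exact hls y'
  have hcard : Fintype.card ((Fin m → ZMod 2) × ZMod 2) = 2 ^ (m + 1) := by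
    simp [Fintype.card_prod, Fintype.card_fun, pow_succ]
  constructor
  · have : (∑ y : (Fin m → ZMod 2) × ZMod 2, ((f y + f (y + (x', 0))).val : ℤ))
        = 2 ^ (m + 1) * (c.val : ℤ) := by
      rw [Finset.sum_congr rfl fun y _ => by rw [fconst y]]
      simp [Finset.sum_const, hcard]
    rw [this]
    have h01 : ∀ a : ZMod 2, a = 0 ∨ a = 1 := by decide
    rcases h01 c with h0 | h0 <;> simp [h0, show ((1:ZMod 2)).val = 1 from rfl]
  · have hb : ∀ y : (Fin m → ZMod 2) × ZMod 2,
        bhatP f y * bhatP f (y + (x', 0)) = (-1 : ℤ) ^ c.val := by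
      intro y
      have key : ∀ u v : ZMod 2, ((-1 : ℤ)) ^ u.val * (-1) ^ v.val = (-1) ^ (u + v).val := by
        decide
      rw [bhatP, bhatP, key, fconst y]
    have : autocorrP f (x', 0) = 2 ^ (m + 1) * (-1 : ℤ) ^ c.val := by
      rw [autocorrP, Finset.sum_congr rfl fun y _ => hb y]
      simp [Finset.sum_const, hcard]
    rw [this]
    have h01 : ∀ a : ZMod 2, a = 0 ∨ a = 1 := by decide
    rcases h01 c with h0 | h0 <;> simp [h0, show ((1:ZMod 2)).val = 1 from rfl]
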